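/- arXiv:1305.1144 — 2 statements merged into one kernel-verified Lean document; each statement's English description precedes it below -/
import Mathlib

section
/- Let ν_1 ≥ ⋯ ≥ ν_n ≥ 0 be real numbers, let 1 ≤ k ≤ m ≤ n, and let π be a partition of m with l(π) ≤ n. Then for every α ∈ Γ_{m,n} such that π majorizes the multiplicity partition μ(α), one has p_{m−k}(ν_{ω(π)}) ≥ p_{m−k}(ν_α). (This is the comparison of eigenvalues used to identify the largest eigenvalue of D^k K_χ(P)(I,…,I) in the proof of the main norm formula.) -/
set_option synthInstance.maxHeartbeats 1000000
set_option maxHeartbeats 1000000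

noncomputable section

/-- `V = ℂⁿ` with the standard inner product. -/
abbrev Vec (n : ℕ) : Type := EuclideanSpace ℂ (Fin n)

/-- `L(V)`, the space of linear operators on `V`, with the operator norm. -/
abbrev Op (n : ℕ) : Type := Vec n →L[ℂ] Vec n

/-- Coordinate model of the `m`-th tensor power `⊗^m V` of `V = ℂⁿ`:
functions on multi-indices `Γ_{m,n}`, with the inner product making the pure tensors of
orthonormal vectors orthonormal. -/
abbrev TVec (n m : ℕ) : Type := EuclideanSpace ℂ (Fin m → Fin n)

abbrev TOp (n m : ℕ) : Type := TVec n m →L[ℂ] TVec n m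

/-- The `(a,b)` matrix entry of an operator on `ℂⁿ` in the standard basis. -/
def entry {n : ℕ} (S : Op n) (a b : Fin n) : ℂ := S (EuclideanSpace.single b 1) a

/-- The tensor product `T 0 ⊗ T 1 ⊗ ⋯ ⊗ T (m-1)` of a family of operators,
acting on `⊗^m V` (coordinate model). -/
def tensorFam {n m : ℕ} (T : Fin m → Op n) : TOp n m :=
  Matrix.toEuclideanCLM (𝕜 := ℂ)
    (Matrix.of fun α β : Fin m → Fin n => ∏ i, entry (T i) (α i) (β i))

/-- The `m`-th tensor power `⊗^m T` of the operator `T`. -/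
def tensorPow (n m : ℕ) (T : Op n) : TOp n m := tensorFam fun _ => T

/-- The symmetrized tensor product `X^1 ⊗̃ ⋯ ⊗̃ X^m = (1/m!) ∑_σ X^{σ(1)} ⊗ ⋯ ⊗ X^{σ(m)}`. -/
def symTensor {n m : ℕ} (X : Fin m → Op n) : TOp n m :=
  ((m.factorial : ℂ))⁻¹ • ∑ σ : Equiv.Perm (Fin m), tensorFam (X ∘ σ)

/-- The permutation operator `P(σ)` on `⊗^m V`, `P(σ)(v_1 ⊗ ⋯ ⊗ v_m) = v_{σ⁻¹(1)} ⊗ ⋯ ⊗ v_{σ⁻¹(m)}`. -/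
def permOp (n m : ℕ) (σ : Equiv.Perm (Fin m)) : TOp n m :=
  Matrix.toEuclideanCLM (𝕜 := ℂ)
    (Matrix.of fun α β : Fin m → Fin n => if β = α ∘ σ then 1 else 0)

/-- The symmetrizer `K_χ = (χ(id)/m!) ∑_σ χ(σ) P(σ)` associated with a character `χ` of `S_m`. -/
def Kproj (n m : ℕ) (χ : Equiv.Perm (Fin m) → ℂ) : TOp n m :=
  (χ 1 / (m.factorial : ℂ)) • ∑ σ : Equiv.Perm (Fin m), χ σ • permOp n m σ

/-- The symmetry class of tensors `V_χ`, the range of `K_χ`. -/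
def symClass (n m : ℕ) (χ : Equiv.Perm (Fin m) → ℂ) : Submodule ℂ (TVec n m) :=
  LinearMap.range (Kproj n m χ : TVec n m →ₗ[ℂ] TVec n m)

/-- `K_χ(T)`, the restriction of `⊗^m T` to the invariant subspace `V_χ`,
realized as `Q* ∘ (⊗^m T) ∘ Q` where `Q : V_χ → ⊗^m V` is the inclusion. -/
def Kmap (n m : ℕ) (χ : Equiv.Perm (Fin m) → ℂ) (T : Op n) :
    symClass n m χ →L[ℂ] symClass n m χ :=
  (symClass n m χ).orthogonalProjectionOnto.comp
    ((tensorPow n m T).comp (symClass n m χ).subtypeL)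

/-- `X^1 ∗ ⋯ ∗ X^m`, the restriction of `X^1 ⊗̃ ⋯ ⊗̃ X^m` to the invariant subspace `V_χ`. -/
def starProd (n m : ℕ) (χ : Equiv.Perm (Fin m) → ℂ) (X : Fin m → Op n) :
    symClass n m χ →L[ℂ] symClass n m χ :=
  (symClass n m χ).orthogonalProjectionOnto.comp
    ((symTensor X).comp (symClass n m χ).subtypeL)

/-- `χ` is the character of an irreducible complex representation of `S_m`. -/
def IsIrreducibleCharacter (m : ℕ) (χ : Equiv.Perm (Fin m) → ℂ) : Prop :=
  ∃ (d : ℕ) (ρ : Representation ℂ (Equiv.Perm (Fin m)) (Fin d → ℂ)),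
    0 < d ∧
    (∀ p : Submodule ℂ (Fin d → ℂ), (∀ g x, x ∈ p → ρ g x ∈ p) → p = ⊥ ∨ p = ⊤) ∧
    ∀ g, χ g = LinearMap.trace ℂ (Fin d → ℂ) (ρ g)

/-- `T` has singular values `ν 0 ≥ ν 1 ≥ ⋯ ≥ ν (n-1)` (singular value decomposition). -/
def HasSingularValues {n : ℕ} (T : Op n) (ν : Fin n → ℝ) : Prop :=
  (∀ i, 0 ≤ ν i) ∧ Antitone ν ∧
    ∃ e f : OrthonormalBasis (Fin n) ℂ (Vec n), ∀ i, T (e i) = (ν i : ℂ) • f i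

/-- `p_t`, the elementary symmetric polynomial of degree `t` in `m` variables. -/
def esymm {R : Type*} [CommSemiring R] (m t : ℕ) (x : Fin m → R) : R :=
  ∑ s ∈ Finset.powersetCard t Finset.univ, ∏ i ∈ s, x i

/-- `multFun α i = |α⁻¹(i)|`, the multiplicity function of `α ∈ Γ_{m,n}`, whose nonzero values,
arranged decreasingly, form the multiplicity partition `μ(α)`. -/
def multFun {m n : ℕ} (α : Fin m → Fin n) : Fin n → ℕ :=
  fun i => (Finset.univ.filter fun j => α j = i).card

/-- The (antitone) partition `π` majorizes the multiplicity list `c` (i.e. `μ ⪯ π` where `μ` is the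
decreasing rearrangement of `c`): for every `s`, the sum of any `s` values of `c` is at most
`π 0 + ⋯ + π (s-1)`. -/
def MajorizesMult {n : ℕ} (π : Fin n → ℕ) (c : Fin n → ℕ) : Prop :=
  ∀ A : Finset (Fin n),
    ∑ i ∈ A, c i ≤ ∑ j ∈ Finset.univ.filter (fun j : Fin n => (j : ℕ) < A.card), π j

/-- `w = ω(π) ∈ Γ_{m,n}`: the nondecreasing map taking each value `i` with multiplicity `π i`. -/
def IsOmega {m n : ℕ} (π : Fin n → ℕ) (w : Fin m → Fin n) : Prop :=
  Monotone w ∧ ∀ i, (Finset.univ.filter fun j => w j = i).card = π i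

/-- The condition `Ω_χ = {α : π majorizes μ(α)}`, i.e. for every `α ∈ Γ_{m,n}`,
`∑_{σ ∈ G_α} χ(σ) ≠ 0` iff `π` majorizes the multiplicity partition `μ(α)`; it holds exactly when
`π` is the partition of `m` canonically associated with the irreducible character `χ`. -/
def OmegaChiCondition {m n : ℕ} (χ : Equiv.Perm (Fin m) → ℂ) (π : Fin n → ℕ) : Prop :=
  ∀ α : Fin m → Fin n,
    (∑ σ ∈ Finset.univ.filter (fun σ : Equiv.Perm (Fin m) => α ∘ σ = α), χ σ) ≠ 0 ↔
      MajorizesMult π (multFun α)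

/-- A linear operator on a subspace `S` of `⊗^m V` is positive semidefinite
(for the inner product inherited from `⊗^m V`). -/
def IsPSDOn {n m : ℕ} (S : Submodule ℂ (TVec n m)) (A : S →L[ℂ] S) : Prop :=
  (∀ x y : S,
      (inner ℂ ((A x : TVec n m)) (y : TVec n m) : ℂ) = inner ℂ (x : TVec n m) ((A y : TVec n m))) ∧
  ∀ x : S, 0 ≤ (inner ℂ ((A x : TVec n m)) (x : TVec n m) : ℂ).re

/-- `⊗^m_S P`: the tensor product `X^1 ⊗ ⋯ ⊗ X^m` in which `X^i = P` for `i ∈ S` and `X^i = I`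
otherwise.  (A subset `S` of `{1,…,m}` of size `m-k` corresponds to the strictly increasing map
`β ∈ Q_{m-k,m}` enumerating it, so this realizes `⊗^m_β P`.) -/
def tensorSel {n m : ℕ} (S : Finset (Fin m)) (P : Op n) : TOp n m :=
  tensorFam fun i => if i ∈ S then P else 1

/-- The pure tensor `v_1 ⊗ ⋯ ⊗ v_m` in the coordinate model of `⊗^m V`. -/
def tensorVec {n m : ℕ} (v : Fin m → Vec n) : TVec n m :=
  (WithLp.equiv 2 ((Fin m → Fin n) → ℂ)).symm fun α => ∏ i, v i (α i)

/-- The decomposable symmetrized tensor `v_1 ∗ ⋯ ∗ v_m = K_χ(v_1 ⊗ ⋯ ⊗ v_m)`,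
as an element of `V_χ`. -/
def estarVec (n m : ℕ) (χ : Equiv.Perm (Fin m) → ℂ) (v : Fin m → Vec n) : symClass n m χ :=
  ⟨Kproj n m χ (tensorVec v), LinearMap.mem_range.mpr ⟨tensorVec v, rfl⟩⟩

lemma my_card_filter_comp_perm {m : ℕ} (σ : Equiv.Perm (Fin m)) (p : Fin m → Prop)
    [DecidablePred p] :
    (Finset.univ.filter fun j => p (σ j)).card = (Finset.univ.filter p).card := by
  apply Finset.card_nbij' σ σ.symm <;> intro j hj <;> simp_all

lemma my_esymm_comp_perm {m t : ℕ} (x : Fin m → ℝ) (σ : Equiv.Perm (Fin m)) :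
    esymm m t (fun j => x (σ j)) = esymm m t x := by
  unfold esymm
  refine Finset.sum_nbij' (fun s => s.image σ) (fun s => s.image σ.symm) ?_ ?_ ?_ ?_ ?_
  · intro s hs
    simp only [Finset.mem_powersetCard] at hs ⊢
    exact ⟨Finset.subset_univ _, by rw [Finset.card_image_of_injective _ σ.injective, hs.2]⟩
  · intro s hs
    simp only [Finset.mem_powersetCard] at hs ⊢
    exact ⟨Finset.subset_univ _, by rw [Finset.card_image_of_injective _ σ.symm.injective, hs.2]⟩
  · intro s _
    ext j; simp [Finset.mem_image]
  · intro s _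
    ext j; simp [Finset.mem_image]
  · intro s _
    rw [Finset.prod_image (fun a _ b _ h => σ.injective h)]

lemma my_esymm_le {m t : ℕ} (x y : Fin m → ℝ) (hx : ∀ j, 0 ≤ x j) (hxy : ∀ j, x j ≤ y j) :
    esymm m t x ≤ esymm m t y := by
  unfold esymm
  exact Finset.sum_le_sum fun s _ =>
    Finset.prod_le_prod (fun i _ => hx i) (fun i _ => hxy i)

lemma my_count_eq_sum {m n : ℕ} (f : Fin m → Fin n) (i : Fin n) :
    (Finset.univ.filter fun j => f j ≤ i).card = ∑ i' ∈ Finset.Iic i, multFun f i' := by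
  unfold multFun
  simp_rw [Finset.card_filter]
  rw [Finset.sum_comm]
  refine Finset.sum_congr rfl fun j _ => ?_
  simp [Finset.sum_ite_eq, Finset.mem_Iic]

lemma my_mono_le_of_counts {m n : ℕ} (a b : Fin m → Fin n) (ha : Monotone a) (hb : Monotone b)
    (h : ∀ i, (Finset.univ.filter fun j => a j ≤ i).card ≤
      (Finset.univ.filter fun j => b j ≤ i).card) :
    ∀ j, b j ≤ a j := by
  intro j
  by_contra hlt
  push_neg at hlt
  have h1 : (Finset.univ.filter fun j' => b j' ≤ a j).card ≤ (j : ℕ) := by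
    have hsub : (Finset.univ.filter fun j' => b j' ≤ a j) ⊆ Finset.Iio j := by
      intro j' hj'
      simp only [Finset.mem_filter] at hj'
      simp only [Finset.mem_Iio]
      by_contra hge
      push_neg at hge
      exact absurd (le_trans (hb hge) hj'.2) (not_le.mpr hlt)
    calc (Finset.univ.filter fun j' => b j' ≤ a j).card ≤ (Finset.Iio j).card :=
          Finset.card_le_card hsub
      _ = (j : ℕ) := by simp
  have h2 : (j : ℕ) + 1 ≤ (Finset.univ.filter fun j' => a j' ≤ a j).card := by
    have hsub : Finset.Iic j ⊆ (Finset.univ.filter fun j' => a j' ≤ a j) := by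
      intro j' hj'
      simp only [Finset.mem_Iic] at hj'
      simp only [Finset.mem_filter, Finset.mem_univ, true_and]
      exact ha hj'
    calc (j : ℕ) + 1 = (Finset.Iic j).card := by simp
      _ ≤ _ := Finset.card_le_card hsub
  have := h (a j)
  omega

/-- for `ν_1 ≥ ⋯ ≥ ν_n ≥ 0`, a partition `π` of `m` (with at most `n` parts), and any
`α ∈ Γ_{m,n}` whose multiplicity partition `μ(α)` is majorized by `π`, one has
`p_{m−k}(ν_{ω(π)}) ≥ p_{m−k}(ν_α)`. -/
theorem esymm_omega_max (n m k : ℕ) (hk1 : 1 ≤ k) (hkm : k ≤ m) (hmn : m ≤ n)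
    (ν : Fin n → ℝ) (hν0 : ∀ i, 0 ≤ ν i) (hν : Antitone ν)
    (π : Fin n → ℕ) (hπ : Antitone π) (hπm : ∑ i, π i = m)
    (w : Fin m → Fin n) (hw : IsOmega π w)
    (α : Fin m → Fin n) (hα : MajorizesMult π (multFun α)) :
    esymm m (m - k) (fun j => ν (α j)) ≤ esymm m (m - k) (fun j => ν (w j)) := by
  obtain ⟨hwmono, hwmult⟩ := hw
  set σ := Tuple.sort α with hσ
  have hamono : Monotone (α ∘ σ) := Tuple.monotone_sort α
  -- prefix-count comparison
  have hcount : ∀ i, (Finset.univ.filter fun j => (α ∘ σ) j ≤ i).card ≤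
      (Finset.univ.filter fun j => w j ≤ i).card := by
    intro i
    have e1 : (Finset.univ.filter fun j => (α ∘ σ) j ≤ i).card =
        (Finset.univ.filter fun j => α j ≤ i).card :=
      my_card_filter_comp_perm σ (fun j => α j ≤ i)
    rw [e1, my_count_eq_sum α i, my_count_eq_sum w i]
    have hA := hα (Finset.Iic i)
    have hcard : (Finset.Iic i).card = (i : ℕ) + 1 := by simp
    have hfil : (Finset.univ.filter fun j : Fin n => (j : ℕ) < (Finset.Iic i).card) =
        Finset.Iic i := by
      ext j
      simp only [Finset.mem_filter, Finset.mem_univ, true_and, hcard, Finset.mem_Iic,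
        Nat.lt_succ_iff, Fin.le_def]
    rw [hfil] at hA
    calc ∑ i' ∈ Finset.Iic i, multFun α i' ≤ ∑ j ∈ Finset.Iic i, π j := hA
      _ = ∑ i' ∈ Finset.Iic i, multFun w i' := by
          refine Finset.sum_congr rfl fun i' _ => ?_
          exact (hwmult i').symm
  have hba : ∀ j, w j ≤ (α ∘ σ) j := my_mono_le_of_counts (α ∘ σ) w hamono hwmono hcount
  calc esymm m (m - k) (fun j => ν (α j))
      = esymm m (m - k) (fun j => ν (α (σ j))) :=
        (my_esymm_comp_perm (fun j => ν (α j)) σ).symm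
    _ ≤ esymm m (m - k) (fun j => ν (w j)) :=
        my_esymm_le _ _ (fun j => hν0 _) (fun j => hν (hba j))

end
end

section
/- Let A ∈ M_n(ℂ) with singular values ν_1 ≥ ⋯ ≥ ν_n and let 1 ≤ k ≤ n. Then the k-th derivative of the determinant satisfies ‖D^k det(A)‖ ≤ k! · p_{n−k}(ν_1, …, ν_n). -/
set_option synthInstance.maxHeartbeats 1000000
set_option maxHeartbeats 1000000

noncomputable section

open scoped Matrix.Norms.L2Operator

/-- The immanant `d_χ(A) = ∑_{σ ∈ S_n} χ(σ) ∏_i a_{iσ(i)}` of a complex `n × n` matrix. -/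
def immanant {n : ℕ} (χ : Equiv.Perm (Fin n) → ℂ) (A : Matrix (Fin n) (Fin n) ℂ) : ℂ :=
  ∑ σ : Equiv.Perm (Fin n), χ σ * ∏ i, A i (σ i)

/-- The matrix `A` has singular values `ν 0 ≥ ν 1 ≥ ⋯ ≥ ν (n-1)`. -/
def MatrixHasSingularValues {n : ℕ} (A : Matrix (Fin n) (Fin n) ℂ) (ν : Fin n → ℝ) : Prop :=
  HasSingularValues (Matrix.toEuclideanCLM (𝕜 := ℂ) A) ν

section AuxDet
open scoped ComplexOrder
open Finset

open Finset

lemma mul_star_self_eq_normSq (z : ℂ) : z * star z = ((‖z‖ ^ 2 : ℝ) : ℂ) := by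
  rw [Complex.star_def, Complex.mul_conj]
  norm_cast
  rw [Complex.normSq_eq_norm_sq]

lemma norm_det_le_one_of_unit_rows {N : ℕ} (U : Matrix (Fin N) (Fin N) ℂ)
    (h : ∀ i, ∑ j, ‖U i j‖ ^ 2 = 1) : ‖U.det‖ ≤ 1 := by
  rcases Nat.eq_zero_or_pos N with hN | hN
  · subst hN; simp [Matrix.det_fin_zero]
  set P := U * U.conjTranspose with hP_def
  have hP : P.PosSemidef := Matrix.posSemidef_self_mul_conjTranspose U
  have hH : P.IsHermitian := hP.1
  set lam := hH.eigenvalues with hlam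
  have hlam_nonneg : ∀ i, 0 ≤ lam i := fun i => hP.eigenvalues_nonneg i
  have hdiag : ∀ i, P i i = 1 := by
    intro i
    have h0 : P i i = ∑ j, U i j * star (U i j) := by
      simp [hP_def, Matrix.mul_apply, Matrix.conjTranspose_apply]
    rw [h0]
    simp_rw [mul_star_self_eq_normSq]
    rw [← Complex.ofReal_sum, h i]
    norm_num
  have htrace : P.trace = (N : ℂ) := by
    rw [Matrix.trace]
    simp [Matrix.diag, hdiag]
  have hsum : ∑ i, lam i = (N : ℝ) := by
    have h1 : P.trace = ∑ i, (lam i : ℂ) := by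
      conv_lhs => rw [hH.spectral_theorem]
      rw [Unitary.conjStarAlgAut_apply, Matrix.trace_mul_comm, ← Matrix.mul_assoc,
        Unitary.coe_star_mul_self hH.eigenvectorUnitary, one_mul, Matrix.trace_diagonal]
      rfl
    rw [htrace] at h1
    have h2 : (N : ℂ) = ((∑ i, lam i : ℝ) : ℂ) := by rw [Complex.ofReal_sum]; exact h1
    exact_mod_cast h2.symm
  have hprod : ∏ i, lam i ≤ 1 := by
    have hNne : (N : ℝ) ≠ 0 := Nat.cast_ne_zero.mpr hN.ne'
    have hw : ∀ i ∈ (univ : Finset (Fin N)), (0:ℝ) ≤ (N : ℝ)⁻¹ := fun _ _ => by positivity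
    have hw1 : ∑ _i : Fin N, (N : ℝ)⁻¹ = 1 := by
      rw [Finset.sum_const, card_univ, Fintype.card_fin, nsmul_eq_mul]
      field_simp
    have hz : ∀ i ∈ univ, (0:ℝ) ≤ lam i := fun i _ => hlam_nonneg i
    have hgm := Real.geom_mean_le_arith_mean_weighted univ (fun _ => (N:ℝ)⁻¹) lam hw hw1 hz
    have hrhs : ∑ i, (N:ℝ)⁻¹ * lam i = 1 := by
      rw [← Finset.mul_sum, hsum]
      field_simp
    rw [hrhs] at hgm
    have h2 : (∏ i, lam i) ^ ((N:ℝ)⁻¹) ≤ 1 := by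
      rw [← Real.finset_prod_rpow univ lam hz]
      exact hgm
    have h3 : ((∏ i, lam i) ^ ((N:ℝ)⁻¹)) ^ (N:ℝ) ≤ 1 ^ (N:ℝ) :=
      Real.rpow_le_rpow (Real.rpow_nonneg (Finset.prod_nonneg hz) _) h2 (by positivity)
    rwa [← Real.rpow_mul (Finset.prod_nonneg hz), inv_mul_cancel₀ hNne,
      Real.rpow_one, Real.one_rpow] at h3
  have hdet2 : (‖U.det‖ ^ 2 : ℝ) = ∏ i, lam i := by
    have h1 : P.det = ∏ i, (lam i : ℂ) := hH.det_eq_prod_eigenvalues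
    have h2 : P.det = U.det * star U.det := by
      rw [hP_def, Matrix.det_mul, Matrix.det_conjTranspose]
    have h4 : ((‖U.det‖ ^ 2 : ℝ) : ℂ) = ((∏ i, lam i : ℝ) : ℂ) := by
      rw [← mul_star_self_eq_normSq, ← h2, h1, Complex.ofReal_prod]
    exact_mod_cast h4
  nlinarith [norm_nonneg U.det, hdet2, hprod]

/-- Hadamard's inequality (row version). -/
lemma norm_det_le_prod_row_norms {N : ℕ} (B : Matrix (Fin N) (Fin N) ℂ) :
    ‖B.det‖ ≤ ∏ i, Real.sqrt (∑ j, ‖B i j‖ ^ 2) := by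
  by_cases hz : ∃ i, B i = 0
  · obtain ⟨i, hi⟩ := hz
    rw [Matrix.det_eq_zero_of_row_eq_zero i (fun j => by rw [hi]; rfl)]
    simp only [norm_zero]
    exact Finset.prod_nonneg fun i _ => Real.sqrt_nonneg _
  push_neg at hz
  set r : Fin N → ℝ := fun i => Real.sqrt (∑ j, ‖B i j‖ ^ 2) with hr
  have hspos : ∀ i, 0 < ∑ j, ‖B i j‖ ^ 2 := by
    intro i
    have hne : ∃ j, B i j ≠ 0 := by
      by_contra hc; push_neg at hc; exact hz i (funext hc)
    obtain ⟨j, hj⟩ := hne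
    have h1 : 0 < ‖B i j‖ ^ 2 := pow_pos (norm_pos_iff.mpr hj) 2
    exact lt_of_lt_of_le h1 (Finset.single_le_sum (f := fun j => ‖B i j‖^2)
      (fun _ _ => by positivity) (mem_univ j))
  have hrpos : ∀ i, 0 < r i := fun i => Real.sqrt_pos.mpr (hspos i)
  set U : Matrix (Fin N) (Fin N) ℂ := Matrix.of fun i j => B i j / (r i : ℂ) with hU
  have hBU : B = Matrix.of fun i j => (r i : ℂ) * U i j := by
    ext i j
    simp only [hU, Matrix.of_apply]
    have hne : ((r i : ℝ) : ℂ) ≠ 0 := by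
      exact_mod_cast (hrpos i).ne'
    rw [mul_comm, div_mul_eq_mul_div, mul_div_assoc, div_self hne, mul_one]
  have hdetB : B.det = (∏ i, (r i : ℂ)) * U.det := by
    have h1 : B.det = (Matrix.detRowAlternating (R := ℂ) (n := Fin N)).toMultilinearMap
        (fun i => (r i : ℂ) • U i) := by
      rw [hBU]; rfl
    rw [h1]
    exact (Matrix.detRowAlternating (R := ℂ) (n := Fin N)).map_smul_univ (fun i => (r i : ℂ))
      (fun i => (U i : Fin N → ℂ))
  have hUrows : ∀ i, ∑ j, ‖U i j‖ ^ 2 = 1 := by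
    intro i
    simp only [hU, Matrix.of_apply]
    have h1 : ∀ j, ‖B i j / (r i : ℂ)‖ ^ 2 = ‖B i j‖^2 / (r i)^2 := by
      intro j
      rw [norm_div, div_pow, Complex.norm_real, Real.norm_eq_abs, abs_of_pos (hrpos i)]
    simp_rw [h1, ← Finset.sum_div]
    rw [hr]
    rw [Real.sq_sqrt (hspos i).le]
    exact div_self (hspos i).ne'
  calc ‖B.det‖ = (∏ i, r i) * ‖U.det‖ := by
        rw [hdetB, norm_mul, norm_prod]
        congr 1
        exact Finset.prod_congr rfl fun i _ => by
          rw [Complex.norm_real, Real.norm_eq_abs, abs_of_pos (hrpos i)]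
    _ ≤ (∏ i, r i) * 1 :=
        mul_le_mul_of_nonneg_left (norm_det_le_one_of_unit_rows U hUrows)
          (Finset.prod_nonneg fun i _ => (hrpos i).le)
    _ = ∏ i, r i := mul_one _



variable (n : ℕ)

/-- determinant as a multilinear map in the rows -/
def detML : MultilinearMap ℂ (fun _ : Fin n => (Fin n → ℂ)) ℂ :=
  (Matrix.detRowAlternating (R := ℂ) (n := Fin n)).toMultilinearMap

lemma detML_apply (x : Fin n → Fin n → ℂ) : detML n x = Matrix.det (Matrix.of x) := rfl

lemma detML_bound (x : Fin n → Fin n → ℂ) : ‖detML n x‖ ≤ (n.factorial : ℝ) * ∏ i, ‖x i‖ := by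
  rw [detML_apply, Matrix.det_apply]
  refine (norm_sum_le _ _).trans ?_
  have h1 : ∀ σ : Equiv.Perm (Fin n), ‖(Equiv.Perm.sign σ : ℤ) • ∏ i, Matrix.of x (σ i) i‖
      ≤ ∏ i, ‖x i‖ := by
    intro σ
    rw [zsmul_eq_mul, norm_mul]
    have hs : ‖((Equiv.Perm.sign σ : ℤ) : ℂ)‖ = 1 := by
      rcases Int.units_eq_one_or (Equiv.Perm.sign σ) with h | h <;> rw [h] <;> norm_num
    rw [hs, one_mul, norm_prod]
    calc ∏ i, ‖Matrix.of x (σ i) i‖ ≤ ∏ i, ‖x (σ i)‖ := by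
          refine Finset.prod_le_prod (fun _ _ => norm_nonneg _) (fun i _ => ?_)
          exact norm_le_pi_norm (x (σ i)) i
      _ = ∏ i, ‖x i‖ := Equiv.prod_comp σ (fun i => ‖x i‖)
  calc ∑ σ : Equiv.Perm (Fin n), ‖(Equiv.Perm.sign σ : ℤ) • ∏ i, Matrix.of x (σ i) i‖
      ≤ ∑ _σ : Equiv.Perm (Fin n), ∏ i, ‖x i‖ := Finset.sum_le_sum fun σ _ => h1 σ
    _ = (n.factorial : ℝ) * ∏ i, ‖x i‖ := by
        rw [Finset.sum_const, Finset.card_univ, Fintype.card_perm, Fintype.card_fin,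
          nsmul_eq_mul]

/-- determinant as a continuous multilinear map (sup norms) -/
def detCML : ContinuousMultilinearMap ℂ (fun _ : Fin n => (Fin n → ℂ)) ℂ :=
  (detML n).mkContinuous (n.factorial : ℝ) (detML_bound n)

lemma detCML_apply (x : Fin n → Fin n → ℂ) : detCML n x = Matrix.det (Matrix.of x) := rfl

/-- identity as CLM from pi-normed functions to L2-op-normed matrices -/
def toMat : (Fin n → Fin n → ℂ) →L[ℂ] Matrix (Fin n) (Fin n) ℂ :=
  LinearMap.toContinuousLinearMap
    { toFun := Matrix.of, map_add' := fun _ _ => rfl, map_smul' := fun _ _ => rfl }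

/-- identity as CLM from L2-op-normed matrices to pi-normed functions -/
def toPi : Matrix (Fin n) (Fin n) ℂ →L[ℂ] (Fin n → Fin n → ℂ) :=
  LinearMap.toContinuousLinearMap
    { toFun := Matrix.of.symm, map_add' := fun _ _ => rfl, map_smul' := fun _ _ => rfl }

lemma contDiff_det : ContDiff ℂ ⊤ (Matrix.det : Matrix (Fin n) (Fin n) ℂ → ℂ) := by
  have h : (Matrix.det : Matrix (Fin n) (Fin n) ℂ → ℂ) = (fun x => detCML n x) ∘ (toPi n) := rfl
  rw [h]
  exact (detCML n).contDiff.comp (toPi n).contDiff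

open Classical in
lemma iterated_det_apply (k : ℕ) (x : Matrix (Fin n) (Fin n) ℂ)
    (V : Fin k → Matrix (Fin n) (Fin n) ℂ) :
    iteratedFDeriv ℂ k (Matrix.det : Matrix (Fin n) (Fin n) ℂ → ℂ) x V =
      ∑ e : Fin k ↪ Fin n, Matrix.det (Matrix.of fun j =>
        if h : j ∈ Set.range e then (V (e.toEquivRange.symm ⟨j, h⟩)) j else x j) := by
  have hcomp : iteratedFDeriv ℂ k ((Matrix.det : Matrix (Fin n) (Fin n) ℂ → ℂ) ∘ (toMat n))
        (fun i j => x i j) =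
      (iteratedFDeriv ℂ k (Matrix.det : Matrix (Fin n) (Fin n) ℂ → ℂ)
        ((toMat n) (fun i j => x i j))).compContinuousLinearMap fun _ => toMat n :=
    (toMat n).iteratedFDeriv_comp_right (contDiff_det n) _ (le_top)
  have h1 : (Matrix.det : Matrix (Fin n) (Fin n) ℂ → ℂ) ∘ (toMat n) = ⇑(detCML n) := rfl
  have h2 : (toMat n) (fun i j => x i j) = x := rfl
  rw [h1, h2] at hcomp
  have h3 := congrFun (congrArg DFunLike.coe hcomp) (fun a => fun i j => V a i j)
  rw [ContinuousMultilinearMap.compContinuousLinearMap_apply] at h3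
  have h4 : (fun a : Fin k => (toMat n) fun i j => V a i j) = V := rfl
  rw [h4] at h3
  rw [← h3, (detCML n).iteratedFDeriv_eq]
  rw [ContinuousMultilinearMap.iteratedFDeriv]
  rw [ContinuousMultilinearMap.sum_apply]
  congr 1
  ext e
  rw [ContinuousMultilinearMap.iteratedFDerivComponent_apply]
  rw [detCML_apply]
  refine congrArg Matrix.det (congrArg Matrix.of (funext fun j => ?_))
  by_cases h : j ∈ Set.range (⇑e)
  · rw [dif_pos h, dif_pos h]
    exact funext fun y => by congr!
  · rw [dif_neg h, dif_neg h]
    exact funext fun _ => rfl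


open Finset

def fiberEquiv {n k : ℕ} (S : Finset (Fin n)) (hS : S.card = k) :
    {e : Fin k ↪ Fin n // Finset.univ.map e = S} ≃ (Fin k ↪ {x // x ∈ S}) where
  toFun := fun ⟨e, he⟩ =>
    ⟨fun a => ⟨e a, by rw [← he]; exact Finset.mem_map_of_mem e (Finset.mem_univ a)⟩,
      fun a b hab => e.injective (congrArg Subtype.val hab)⟩
  invFun := fun φ => ⟨φ.trans (Function.Embedding.subtype _), by
    have hsub : Finset.univ.map (φ.trans (Function.Embedding.subtype _)) ⊆ S := by
      intro x hx
      rw [Finset.mem_map] at hx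
      obtain ⟨a, _, rfl⟩ := hx
      exact (φ a).2
    exact Finset.eq_of_subset_of_card_le hsub (by
      rw [Finset.card_map, Finset.card_univ, Fintype.card_fin, hS])⟩
  left_inv := fun ⟨e, he⟩ => Subtype.ext (by ext a; rfl)
  right_inv := fun φ => by ext a; rfl

lemma fiber_card {n k : ℕ} (S : Finset (Fin n)) (hS : S.card = k) :
    (Finset.univ.filter (fun e : Fin k ↪ Fin n => Finset.univ.map e = S)).card = k.factorial := by
  classical
  rw [← Fintype.card_subtype]
  rw [Fintype.card_congr (fiberEquiv S hS), Fintype.card_embedding_eq, Fintype.card_coe, hS,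
    Fintype.card_fin, Nat.descFactorial_self]

lemma sum_embeddings {n k : ℕ} (hkn : k ≤ n) (ν : Fin n → ℝ) :
    ∑ e : Fin k ↪ Fin n, ∏ j ∈ Finset.univ.filter (fun j => j ∉ Set.range e), ν j
      = (k.factorial : ℝ) * ∑ s ∈ Finset.powersetCard (n - k) Finset.univ, ∏ i ∈ s, ν i := by
  classical
  have h1 : ∀ e : Fin k ↪ Fin n,
      Finset.univ.filter (fun j => j ∉ Set.range e) = (Finset.univ.map e)ᶜ := by
    intro e; ext j; simp
  simp_rw [h1]
  rw [← Finset.sum_fiberwise_of_maps_to (g := fun e : Fin k ↪ Fin n => Finset.univ.map e)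
      (t := Finset.powersetCard k Finset.univ) (fun e _ => by
        rw [Finset.mem_powersetCard_univ, Finset.card_map, Finset.card_univ, Fintype.card_fin])]
  have h2 : ∀ S ∈ Finset.powersetCard k (Finset.univ : Finset (Fin n)),
      ∑ e ∈ Finset.univ.filter (fun e : Fin k ↪ Fin n => Finset.univ.map e = S),
        ∏ j ∈ (Finset.univ.map e)ᶜ, ν j = (k.factorial : ℝ) * ∏ j ∈ Sᶜ, ν j := by
    intro S hS
    rw [Finset.sum_congr rfl (fun e he => by rw [(Finset.mem_filter.mp he).2]),
      Finset.sum_const, fiber_card S (Finset.mem_powersetCard_univ.mp hS), nsmul_eq_mul]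
  rw [Finset.sum_congr rfl h2, ← Finset.mul_sum]
  congr 1
  refine Finset.sum_nbij' (fun S => Sᶜ) (fun T => Tᶜ) ?_ ?_ ?_ ?_ ?_
  · intro S hS
    rw [Finset.mem_powersetCard_univ, Finset.card_compl,
      Finset.mem_powersetCard_univ.mp hS, Fintype.card_fin]
  · intro T hT
    rw [Finset.mem_powersetCard_univ, Finset.card_compl,
      Finset.mem_powersetCard_univ.mp hT, Fintype.card_fin]
    omega
  · intro S _; exact compl_compl S
  · intro T _; exact compl_compl T
  · intro S _; rfl




lemma unitary_of_orthonormal_cols {n : ℕ} (e : OrthonormalBasis (Fin n) ℂ (Vec n)) :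
    (Matrix.of fun i j => e j i) ∈ unitary (Matrix (Fin n) (Fin n) ℂ) := by
  set E := Matrix.of fun i j => e j i with hE
  have h1 : star E * E = 1 := by
    ext j k
    rw [Matrix.mul_apply, Matrix.one_apply]
    have : ∀ i, (star E) j i * E i k = (starRingEnd ℂ) (e j i) * (e k i) := by
      intro i
      rw [Matrix.star_eq_conjTranspose, Matrix.conjTranspose_apply, hE]
      rfl
    simp_rw [this]
    have hinner : (inner ℂ (e j) (e k) : ℂ) = ∑ i, (starRingEnd ℂ) (e j i) * (e k i) :=
      by rw [PiLp.inner_apply]; simp [RCLike.inner_apply, mul_comm]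
    rw [← hinner, orthonormal_iff_ite.mp e.orthonormal]
  exact ⟨h1, mul_eq_one_comm.mp h1⟩

lemma svd_decomp {n : ℕ} (A : Matrix (Fin n) (Fin n) ℂ) (ν : Fin n → ℝ)
    (hν : HasSingularValues (Matrix.toEuclideanCLM (𝕜 := ℂ) A) ν) :
    ∃ U W : Matrix (Fin n) (Fin n) ℂ, U ∈ unitary (Matrix (Fin n) (Fin n) ℂ) ∧
      W ∈ unitary (Matrix (Fin n) (Fin n) ℂ) ∧
      A = U * Matrix.diagonal (fun i => (ν i : ℂ)) * W := by
  obtain ⟨hpos, hmono, e, f, he⟩ := hν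
  set E := Matrix.of fun i j => e j i with hEdef
  set F := Matrix.of fun i j => f j i with hFdef
  have hE := unitary_of_orthonormal_cols e
  have hF := unitary_of_orthonormal_cols f
  set D := Matrix.diagonal (fun i => (ν i : ℂ)) with hD
  refine ⟨F, star E, hF, Unitary.star_mem hE, ?_⟩
  have key : A * E = F * D := by
    ext i j
    have h1 : (A * E) i j = (Matrix.mulVec A (fun l => e j l)) i := by
      rw [Matrix.mul_apply, Matrix.mulVec]
      rfl
    have h2 : (Matrix.mulVec A (fun l => e j l)) = fun i => (ν j : ℂ) * f j i := by
      have h3 := he j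
      have h4 := congrArg WithLp.ofLp h3
      rw [Matrix.ofLp_toEuclideanCLM] at h4
      have h5 : (e j).ofLp = fun l => e j l := rfl
      rw [h5] at h4
      rw [h4]
      rfl
    rw [h1, h2, hFdef, hD, Matrix.mul_diagonal]
    rw [Matrix.of_apply]
    ring
  have hEunit : E * star E = 1 := (Unitary.mem_iff.mp hE).2
  calc A = A * (E * star E) := by rw [hEunit, Matrix.mul_one]
    _ = (A * E) * star E := by rw [Matrix.mul_assoc]
    _ = F * D * star E := by rw [key]

def conjIso {n : ℕ} (U W : Matrix (Fin n) (Fin n) ℂ)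
    (hU : U ∈ unitary (Matrix (Fin n) (Fin n) ℂ))
    (hW : W ∈ unitary (Matrix (Fin n) (Fin n) ℂ)) :
    Matrix (Fin n) (Fin n) ℂ ≃ₗᵢ[ℂ] Matrix (Fin n) (Fin n) ℂ where
  toFun := fun X => U * X * W
  map_add' := fun X Y => by
    show U * (X + Y) * W = U * X * W + U * Y * W
    rw [Matrix.mul_add, Matrix.add_mul]
  map_smul' := fun c X => by
    show U * (c • X) * W = c • (U * X * W)
    rw [Matrix.mul_smul, Matrix.smul_mul]
  invFun := fun Y => star U * Y * star W
  left_inv := fun X => by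
    show star U * (U * X * W) * star W = X
    have h1 : star U * (U * X * W) = X * W := by
      rw [← Matrix.mul_assoc, ← Matrix.mul_assoc, (Unitary.mem_iff.mp hU).1, Matrix.one_mul]
    rw [h1, Matrix.mul_assoc, (Unitary.mem_iff.mp hW).2, Matrix.mul_one]
  right_inv := fun Y => by
    show U * (star U * Y * star W) * W = Y
    have h1 : U * (star U * Y * star W) = Y * star W := by
      rw [← Matrix.mul_assoc, ← Matrix.mul_assoc, (Unitary.mem_iff.mp hU).2, Matrix.one_mul]
    rw [h1, Matrix.mul_assoc, (Unitary.mem_iff.mp hW).1, Matrix.mul_one]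
  norm_map' := fun X => by
    exact (CStarRing.norm_mul_mem_unitary (U * X) hW).trans
      (CStarRing.norm_mem_unitary_mul X hU)

lemma norm_det_unitary {n : ℕ} {U : Matrix (Fin n) (Fin n) ℂ}
    (hU : U ∈ unitary (Matrix (Fin n) (Fin n) ℂ)) : ‖U.det‖ = 1 := by
  have h1 := congrArg Matrix.det (Unitary.mem_iff.mp hU).1
  rw [Matrix.det_mul, Matrix.star_eq_conjTranspose, Matrix.det_conjTranspose,
    Matrix.det_one] at h1
  have h2 : ‖star U.det * U.det‖ = 1 := by rw [h1, norm_one]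
  rw [norm_mul, norm_star] at h2
  nlinarith [norm_nonneg U.det]


lemma row_norm_le {n : ℕ} (X : Matrix (Fin n) (Fin n) ℂ) (j : Fin n) :
    Real.sqrt (∑ i, ‖X j i‖ ^ 2) ≤ ‖X‖ := by
  have h1 := Matrix.l2_opNorm_mulVec X.conjTranspose (EuclideanSpace.single j 1)
  rw [Matrix.l2_opNorm_conjTranspose, EuclideanSpace.norm_single, norm_one, mul_one] at h1
  refine le_trans (le_of_eq ?_) h1
  rw [EuclideanSpace.norm_eq]
  congr 1
  refine Finset.sum_congr rfl fun i _ => ?_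
  have h2 : (Matrix.mulVec X.conjTranspose (EuclideanSpace.single j 1)) i = star (X j i) := by
    rw [Matrix.mulVec]
    show ∑ l, X.conjTranspose i l * (EuclideanSpace.single j (1:ℂ)) l = star (X j i)
    rw [Finset.sum_eq_single j]
    · rw [Matrix.conjTranspose_apply, EuclideanSpace.single_apply, if_pos rfl, mul_one]
    · intro b _ hb
      rw [EuclideanSpace.single_apply, if_neg hb, mul_zero]
    · intro h; exact absurd (Finset.mem_univ j) h
  have h3 : ((EuclideanSpace.equiv (Fin n) ℂ).symm
      (Matrix.mulVec X.conjTranspose (EuclideanSpace.single j 1))) i = star (X j i) := h2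
  rw [h3, norm_star]


lemma diag_bound (n k : ℕ) (hkn : k ≤ n) (ν : Fin n → ℝ) (hpos : ∀ i, 0 ≤ ν i) :
    ‖iteratedFDeriv ℂ k (Matrix.det : Matrix (Fin n) (Fin n) ℂ → ℂ)
        (Matrix.diagonal (fun i => (ν i : ℂ)))‖
      ≤ (k.factorial : ℝ) * ∑ s ∈ Finset.powersetCard (n - k) Finset.univ, ∏ i ∈ s, ν i := by
  classical
  have hRHS : (0:ℝ) ≤ (k.factorial : ℝ) * ∑ s ∈ Finset.powersetCard (n - k) Finset.univ,
      ∏ i ∈ s, ν i := by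
    apply mul_nonneg (by positivity)
    exact Finset.sum_nonneg fun s _ => Finset.prod_nonneg fun i _ => hpos i
  apply ContinuousMultilinearMap.opNorm_le_bound hRHS
  intro V
  set D := Matrix.diagonal (fun i => (ν i : ℂ)) with hD
  rw [iterated_det_apply]
  refine (norm_sum_le _ _).trans ?_
  have hterm : ∀ e : Fin k ↪ Fin n,
      ‖Matrix.det (Matrix.of fun j =>
          if h : j ∈ Set.range e then (V (e.toEquivRange.symm ⟨j, h⟩)) j else D j)‖
        ≤ (∏ j ∈ Finset.univ.filter (fun j => j ∉ Set.range ⇑e), ν j) * ∏ a, ‖V a‖ := by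
    intro e
    set M := Matrix.of fun j =>
      if h : j ∈ Set.range e then (V (e.toEquivRange.symm ⟨j, h⟩)) j else D j with hM
    refine (norm_det_le_prod_row_norms M).trans ?_
    rw [← Finset.prod_filter_mul_prod_filter_not Finset.univ (fun j => j ∈ Set.range ⇑e)]
    rw [mul_comm]
    apply mul_le_mul
    · -- rows outside the range: diagonal rows
      apply le_of_eq
      refine Finset.prod_congr rfl fun j hj => ?_
      have hj' : j ∉ Set.range ⇑e := (Finset.mem_filter.mp hj).2
      have hrow : ∀ i, M j i = D j i := by
        intro i
        rw [hM, Matrix.of_apply, dif_neg hj']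
      have : ∑ i, ‖M j i‖ ^ 2 = ν j ^ 2 := by
        simp_rw [hrow]
        rw [Finset.sum_eq_single j]
        · rw [hD, Matrix.diagonal_apply_eq, Complex.norm_real, Real.norm_eq_abs, sq_abs]
        · intro b _ hb
          rw [hD, Matrix.diagonal_apply_ne' _ hb, norm_zero]
          norm_num
        · intro h; exact absurd (Finset.mem_univ j) h
      rw [this, Real.sqrt_sq (hpos j)]
    · -- rows in the range
      set u : Fin n → ℝ := fun j =>
        if h : j ∈ Set.range ⇑e then ‖V (e.toEquivRange.symm ⟨j, h⟩)‖ else 1 with hu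
      have step1 : ∏ j ∈ Finset.univ.filter (fun j => j ∈ Set.range ⇑e),
          Real.sqrt (∑ i, ‖M j i‖ ^ 2) ≤ ∏ j ∈ Finset.univ.filter (fun j => j ∈ Set.range ⇑e),
          u j := by
        refine Finset.prod_le_prod (fun j _ => Real.sqrt_nonneg _) (fun j hj => ?_)
        have hj' : j ∈ Set.range ⇑e := (Finset.mem_filter.mp hj).2
        have hrow : ∀ i, M j i = V (e.toEquivRange.symm ⟨j, hj'⟩) j i := by
          intro i
          rw [hM, Matrix.of_apply, dif_pos hj']
        rw [hu]
        simp_rw [hrow]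
        rw [dif_pos hj']
        exact row_norm_le _ j
      refine step1.trans (le_of_eq ?_)
      refine (Finset.prod_bij (fun (a : Fin k) _ => e a) ?_ ?_ ?_ ?_).symm
      · intro a _
        exact Finset.mem_filter.mpr ⟨Finset.mem_univ _, Set.mem_range_self a⟩
      · intro a _ b _ hab
        exact e.injective hab
      · intro j hj
        obtain ⟨a, ha⟩ := (Finset.mem_filter.mp hj).2
        exact ⟨a, Finset.mem_univ a, ha⟩
      · intro a _
        have hmem : e a ∈ Set.range ⇑e := Set.mem_range_self a
        simp only [hu]
        rw [dif_pos hmem, Function.Embedding.toEquivRange_symm_apply_self e a]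
    · exact Finset.prod_nonneg fun _ _ => Real.sqrt_nonneg _
    · exact Finset.prod_nonneg fun a _ => hpos a
  calc ∑ e : Fin k ↪ Fin n, ‖Matrix.det (Matrix.of fun j =>
          if h : j ∈ Set.range e then (V (e.toEquivRange.symm ⟨j, h⟩)) j else D j)‖
      ≤ ∑ e : Fin k ↪ Fin n,
          (∏ j ∈ Finset.univ.filter (fun j => j ∉ Set.range ⇑e), ν j) * ∏ a, ‖V a‖ :=
        Finset.sum_le_sum fun e _ => hterm e
    _ = (∑ e : Fin k ↪ Fin n, ∏ j ∈ Finset.univ.filter (fun j => j ∉ Set.range ⇑e), ν j)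
          * ∏ a, ‖V a‖ := by rw [← Finset.sum_mul]
    _ = ((k.factorial : ℝ) * ∑ s ∈ Finset.powersetCard (n - k) Finset.univ, ∏ i ∈ s, ν i)
          * ∏ a, ‖V a‖ := by rw [sum_embeddings hkn ν]

end AuxDet

/-- `‖D^k det(A)‖ ≤ k! · p_{n−k}(ν_1,…,ν_n)` for `1 ≤ k ≤ n`, where
`ν_1 ≥ ⋯ ≥ ν_n` are the singular values of `A`. -/
theorem norm_kth_deriv_det_le (n k : ℕ) (hk1 : 1 ≤ k) (hkn : k ≤ n)
    (A : Matrix (Fin n) (Fin n) ℂ) (ν : Fin n → ℝ) (hν : MatrixHasSingularValues A ν) :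
    ‖iteratedFDeriv ℂ k Matrix.det A‖ ≤ (k.factorial : ℝ) * esymm n (n - k) ν := by
  obtain ⟨U, W, hU, hW, hA⟩ := svd_decomp A ν hν
  obtain ⟨hpos, hmono, _⟩ := hν
  set D := Matrix.diagonal (fun i => (ν i : ℂ)) with hD
  have hred : ‖iteratedFDeriv ℂ k (Matrix.det : Matrix (Fin n) (Fin n) ℂ → ℂ) A‖
      = ‖iteratedFDeriv ℂ k (Matrix.det : Matrix (Fin n) (Fin n) ℂ → ℂ) D‖ := by
    have hcomp := LinearIsometryEquiv.norm_iteratedFDeriv_comp_right (conjIso U W hU hW)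
      (Matrix.det : Matrix (Fin n) (Fin n) ℂ → ℂ) D k
    have hgD : (conjIso U W hU hW) D = A := by rw [hA]; rfl
    rw [hgD] at hcomp
    rw [← hcomp]
    have hdetcomp : (Matrix.det : Matrix (Fin n) (Fin n) ℂ → ℂ) ∘ (conjIso U W hU hW)
        = (U.det * W.det) • (Matrix.det : Matrix (Fin n) (Fin n) ℂ → ℂ) := by
      funext X
      show Matrix.det (U * X * W) = (U.det * W.det) * X.det
      rw [Matrix.det_mul, Matrix.det_mul]
      ring
    rw [hdetcomp, iteratedFDeriv_const_smul_apply ((contDiff_det n).of_le le_top).contDiffAt]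
    rw [norm_smul (U.det * W.det) (iteratedFDeriv ℂ k (Matrix.det :
        Matrix (Fin n) (Fin n) ℂ → ℂ) D)]
    rw [norm_mul, norm_det_unitary hU, norm_det_unitary hW, one_mul, one_mul]
  rw [hred]
  exact diag_bound n k hkn ν hpos

end
end
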